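/- For every positive integer n there exists a set S = {s₁, s₂, ..., sₙ} of n distinct positive integers contained in {1, ..., 4n²} such that whenever sᵢ + s_ℓ = s_j + s_k for indices i, ℓ, j, k, one has {i, ℓ} = {j, k} (i.e., S is a Sidon set of size n inside {1, ..., 4n²}). -/

import Mathlib

/-- `S` is a Sidon set: `x + y = z + w` in `S` forces `{x, y} = {z, w}`. -/
def IsSidon (S : Finset ℕ) : Prop :=
  ∀ x ∈ S, ∀ y ∈ S, ∀ z ∈ S, ∀ w ∈ S,
    x + y = z + w → ({x, y} : Finset ℕ) = ({z, w} : Finset ℕ)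

lemma euclid_aux {m s1 r1 s2 r2 : ℕ} (h1 : r1 < m) (h2 : r2 < m)
    (h : m * s1 + r1 = m * s2 + r2) : s1 = s2 ∧ r1 = r2 := by
  have hm : 0 < m := by omega
  have d1 : (m * s1 + r1) / m = s1 := by
    rw [Nat.mul_add_div hm, Nat.div_eq_of_lt h1]; omega
  have d2 : (m * s2 + r2) / m = s2 := by
    rw [Nat.mul_add_div hm, Nat.div_eq_of_lt h2]; omega
  have hs : s1 = s2 := by rw [← d1, ← d2, h]
  subst hs
  exact ⟨rfl, by omega⟩

/-- For every positive `n` there is a Sidon set of `n` (distinct, positive) elements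
inside `{1, …, 4n²}`. -/
theorem stmt_4 (n : ℕ) (hn : 0 < n) :
    ∃ S : Finset ℕ, S.card = n ∧ S ⊆ Finset.Icc 1 (4 * n ^ 2) ∧ IsSidon S := by
  rcases eq_or_lt_of_le (show 1 ≤ n from hn) with h1 | h2
  · -- n = 1
    refine ⟨{1}, by simp [← h1], ?_, ?_⟩
    · intro x hx
      simp at hx
      simp [hx, Finset.mem_Icc]
      nlinarith
    · intro x hx y hy z hz w hw _
      simp at hx hy hz hw
      simp [hx, hy, hz, hw]
  · -- n ≥ 2
    obtain ⟨p, hp, hnp, hp2n⟩ := Nat.exists_prime_lt_and_le_two_mul n (by omega)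
    haveI : Fact p.Prime := ⟨hp⟩
    have hppos : 0 < p := hp.pos
    have hp3 : 2 < p := lt_of_le_of_lt (show 2 ≤ n from h2) hnp
    set f : ℕ → ℕ := fun i => 2 * p * i + i ^ 2 % p + 1 with hf
    have hkey : ∀ a b c d : ℕ, a < n → b < n → c < n → d < n →
        f a + f b = f c + f d → (a = c ∧ b = d) ∨ (a = d ∧ b = c) := by
      intro a b c d ha hb hc hd h
      have hra : a ^ 2 % p < p := Nat.mod_lt _ hppos
      have hrb : b ^ 2 % p < p := Nat.mod_lt _ hppos
      have hrc : c ^ 2 % p < p := Nat.mod_lt _ hppos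
      have hrd : d ^ 2 % p < p := Nat.mod_lt _ hppos
      have h' : 2 * p * (a + b) + (a ^ 2 % p + b ^ 2 % p) =
          2 * p * (c + d) + (c ^ 2 % p + d ^ 2 % p) := by
        simp only [hf] at h; ring_nf at h ⊢; omega
      obtain ⟨hsum, hres⟩ := euclid_aux (by omega) (by omega) h'
      -- transfer to ZMod p
      have hs : (a : ZMod p) + b = c + d := by exact_mod_cast congrArg (Nat.cast : ℕ → ZMod p) hsum
      have hq : (a : ZMod p) ^ 2 + b ^ 2 = c ^ 2 + d ^ 2 := by
        have := congrArg (Nat.cast : ℕ → ZMod p) hres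
        push_cast [ZMod.natCast_mod] at this
        exact this
      have h2ne : (2 : ZMod p) ≠ 0 := by
        have : ((2 : ℕ) : ZMod p) ≠ 0 := by
          rw [Ne, ZMod.natCast_eq_zero_iff]
          intro hdvd
          have := Nat.le_of_dvd (by norm_num) hdvd
          omega
        simpa using this
      have hab : (a : ZMod p) * b = c * d := by
        have hsq : ((a : ZMod p) + b) ^ 2 = ((c : ZMod p) + d) ^ 2 := by rw [hs]
        have h2 : (2 : ZMod p) * ((a : ZMod p) * b) = 2 * ((c : ZMod p) * d) := by
          linear_combination hsq - hq
        exact mul_left_cancel₀ h2ne h2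
      have hzero : ((a : ZMod p) - c) * ((a : ZMod p) - d) = 0 := by
        linear_combination (a : ZMod p) * hs - hab
      have castinj : ∀ x y : ℕ, x < p → y < p → (x : ZMod p) = y → x = y := by
        intro x y hx hy hxy
        have := congrArg ZMod.val hxy
        rwa [ZMod.val_cast_of_lt hx, ZMod.val_cast_of_lt hy] at this
      rcases mul_eq_zero.mp hzero with hac | had
      · have : a = c := castinj a c (by omega) (by omega) (sub_eq_zero.mp hac)
        left; exact ⟨this, by omega⟩
      · have : a = d := castinj a d (by omega) (by omega) (sub_eq_zero.mp had)
        right; exact ⟨this, by omega⟩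
    refine ⟨(Finset.range n).image f, ?_, ?_, ?_⟩
    · rw [Finset.card_image_of_injOn, Finset.card_range]
      intro a ha b hb hab
      simp only [Finset.coe_range, Set.mem_Iio] at ha hb
      have := hkey a a b b ha ha hb hb (by omega)
      omega
    · intro x hx
      simp only [Finset.mem_image, Finset.mem_range] at hx
      obtain ⟨i, hi, rfl⟩ := hx
      have hmod : i ^ 2 % p < p := Nat.mod_lt _ hppos
      simp only [hf, Finset.mem_Icc]
      constructor
      · omega
      · nlinarith
    · intro x hx y hy z hz w hw hxyzw
      simp only [Finset.mem_image, Finset.mem_range] at hx hy hz hw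
      obtain ⟨a, ha, rfl⟩ := hx
      obtain ⟨b, hb, rfl⟩ := hy
      obtain ⟨c, hc, rfl⟩ := hz
      obtain ⟨d, hd, rfl⟩ := hw
      rcases hkey a b c d ha hb hc hd hxyzw with ⟨rfl, rfl⟩ | ⟨rfl, rfl⟩
      · rfl
      · exact Finset.pair_comm _ _
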